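/- Let M, N be m×m complex matrices with i(M − M*) ⪰ 0 and i(N − N*) ⪰ 0, and suppose I − NM and I − MN are invertible. Then the 2m×2m block matrix T = [[M(I − NM)⁻¹, M(I − NM)⁻¹N], [N(I − MN)⁻¹M, N(I − MN)⁻¹]] satisfies i(T − T*) ⪰ 0. -/

import Mathlib

open Matrix
open scoped ComplexOrder

lemma blockdiag_psd {n p : Type*} [Fintype n] [Fintype p]
    {A : Matrix n n ℂ} {B : Matrix p p ℂ} (hA : A.PosSemidef) (hB : B.PosSemidef) :
    (Matrix.fromBlocks A 0 0 B).PosSemidef := by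
  refine Matrix.PosSemidef.of_dotProduct_mulVec_nonneg ?_ ?_
  · unfold Matrix.IsHermitian
    rw [fromBlocks_conjTranspose]
    simp [hA.1.eq, hB.1.eq]
  · intro x
    rw [fromBlocks_mulVec]
    have hstar : star x = Sum.elim (star (x ∘ Sum.inl)) (star (x ∘ Sum.inr)) := by
      funext i; cases i <;> rfl
    rw [hstar]
    simp only [Matrix.zero_mulVec, add_zero, zero_add]
    rw [sumElim_dotProduct_sumElim]
    exact add_nonneg (hA.dotProduct_mulVec_nonneg _) (hB.dotProduct_mulVec_nonneg _)

theorem stmt_4 (m : ℕ) (M N : Matrix (Fin m) (Fin m) ℂ)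
    (hM : (Complex.I • (M - Mᴴ)).PosSemidef)
    (hN : (Complex.I • (N - Nᴴ)).PosSemidef)
    (h1 : IsUnit (1 - N * M)) (h2 : IsUnit (1 - M * N)) :
    letI T : Matrix (Fin m ⊕ Fin m) (Fin m ⊕ Fin m) ℂ :=
      Matrix.fromBlocks (M * (1 - N * M)⁻¹) (M * (1 - N * M)⁻¹ * N)
        (N * (1 - M * N)⁻¹ * M) (N * (1 - M * N)⁻¹)
    (Complex.I • (T - Tᴴ)).PosSemidef := by
  set T : Matrix (Fin m ⊕ Fin m) (Fin m ⊕ Fin m) ℂ :=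
    Matrix.fromBlocks (M * (1 - N * M)⁻¹) (M * (1 - N * M)⁻¹ * N)
      (N * (1 - M * N)⁻¹ * M) (N * (1 - M * N)⁻¹) with hT
  have hdet1 : IsUnit (1 - N * M).det := (Matrix.isUnit_iff_isUnit_det _).mp h1
  have hdet2 : IsUnit (1 - M * N).det := (Matrix.isUnit_iff_isUnit_det _).mp h2
  have e1 : (1 - N * M) * (1 - N * M)⁻¹ = 1 := Matrix.mul_nonsing_inv _ hdet1
  have e1' : (1 - N * M)⁻¹ * (1 - N * M) = 1 := Matrix.nonsing_inv_mul _ hdet1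
  have e2 : (1 - M * N) * (1 - M * N)⁻¹ = 1 := Matrix.mul_nonsing_inv _ hdet2
  have e2' : (1 - M * N)⁻¹ * (1 - M * N) = 1 := Matrix.nonsing_inv_mul _ hdet2
  have pushA : (1 - M * N)⁻¹ * M = M * (1 - N * M)⁻¹ := by
    have h : (1 - M * N) * (M * (1 - N * M)⁻¹) = M := by
      rw [← mul_assoc]
      have hc : (1 - M * N) * M = M * (1 - N * M) := by noncomm_ring
      rw [hc, mul_assoc, e1, mul_one]
    calc (1 - M * N)⁻¹ * M = (1 - M * N)⁻¹ * ((1 - M * N) * (M * (1 - N * M)⁻¹)) := by rw [h]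
      _ = M * (1 - N * M)⁻¹ := by rw [← mul_assoc, e2', one_mul]
  have pushB : (1 - N * M)⁻¹ * N = N * (1 - M * N)⁻¹ := by
    have h : (1 - N * M) * (N * (1 - M * N)⁻¹) = N := by
      rw [← mul_assoc]
      have hc : (1 - N * M) * N = N * (1 - M * N) := by noncomm_ring
      rw [hc, mul_assoc, e2, mul_one]
    calc (1 - N * M)⁻¹ * N = (1 - N * M)⁻¹ * ((1 - N * M) * (N * (1 - M * N)⁻¹)) := by rw [h]
      _ = N * (1 - M * N)⁻¹ := by rw [← mul_assoc, e1', one_mul]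
  have inv1 : (1 : Matrix (Fin m) (Fin m) ℂ) + N * (1 - M * N)⁻¹ * M = (1 - N * M)⁻¹ := by
    have h3 : (1 - N * M) * (1 + N * (1 - M * N)⁻¹ * M) = 1 := by
      have h4 : (1 - N * M) * (N * (1 - M * N)⁻¹ * M)
          = N * ((1 - M * N) * (1 - M * N)⁻¹) * M := by noncomm_ring
      rw [Matrix.mul_add, Matrix.mul_one, h4, e2]
      noncomm_ring
    calc (1 : Matrix (Fin m) (Fin m) ℂ) + N * (1 - M * N)⁻¹ * M
        = (1 - N * M)⁻¹ * ((1 - N * M) * (1 + N * (1 - M * N)⁻¹ * M)) := by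
          rw [← mul_assoc, e1', one_mul]
      _ = (1 - N * M)⁻¹ := by rw [h3, mul_one]
  have inv2 : (1 : Matrix (Fin m) (Fin m) ℂ) + M * (1 - N * M)⁻¹ * N = (1 - M * N)⁻¹ := by
    have h3 : (1 - M * N) * (1 + M * (1 - N * M)⁻¹ * N) = 1 := by
      have h4 : (1 - M * N) * (M * (1 - N * M)⁻¹ * N)
          = M * ((1 - N * M) * (1 - N * M)⁻¹) * N := by noncomm_ring
      rw [Matrix.mul_add, Matrix.mul_one, h4, e1]
      noncomm_ring
    calc (1 : Matrix (Fin m) (Fin m) ℂ) + M * (1 - N * M)⁻¹ * N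
        = (1 - M * N)⁻¹ * ((1 - M * N) * (1 + M * (1 - N * M)⁻¹ * N)) := by
          rw [← mul_assoc, e2', one_mul]
      _ = (1 - M * N)⁻¹ := by rw [h3, mul_one]
  set D : Matrix (Fin m ⊕ Fin m) (Fin m ⊕ Fin m) ℂ := Matrix.fromBlocks M 0 0 N with hD
  set J : Matrix (Fin m ⊕ Fin m) (Fin m ⊕ Fin m) ℂ := Matrix.fromBlocks 0 1 1 0 with hJ
  have hJh : Jᴴ = J := by
    rw [hJ, fromBlocks_conjTranspose]; simp
  set E : Matrix (Fin m ⊕ Fin m) (Fin m ⊕ Fin m) ℂ := 1 + J * T with hE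
  have key : T = D * E := by
    rw [hE, hJ, hT, hD]
    rw [show (1 : Matrix (Fin m ⊕ Fin m) (Fin m ⊕ Fin m) ℂ) = Matrix.fromBlocks 1 0 0 1 from
      Matrix.fromBlocks_one.symm]
    rw [Matrix.fromBlocks_multiply, Matrix.fromBlocks_add, Matrix.fromBlocks_multiply]
    simp only [Matrix.zero_mul, Matrix.mul_zero, Matrix.one_mul, Matrix.mul_one,
      add_zero, zero_add]
    rw [Matrix.fromBlocks_inj]
    refine ⟨?_, ?_, ?_, ?_⟩
    · rw [← inv1]
    · rw [mul_assoc, pushB]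
    · rw [mul_assoc, pushA]
    · rw [← inv2]
  have main : Complex.I • (T - Tᴴ) = Eᴴ * (Complex.I • (D - Dᴴ)) * E := by
    have hTh : Tᴴ = Eᴴ * Dᴴ := by rw [key, Matrix.conjTranspose_mul]
    have hEh : Eᴴ = 1 + Tᴴ * J := by
      rw [hE, Matrix.conjTranspose_add, Matrix.conjTranspose_one, Matrix.conjTranspose_mul, hJh]
    rw [Matrix.mul_smul, Matrix.smul_mul]
    congr 1
    rw [Matrix.mul_sub, Matrix.sub_mul]
    have t1 : Eᴴ * D * E = T + Tᴴ * J * T := by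
      rw [mul_assoc, ← key, hEh, Matrix.add_mul, Matrix.one_mul, mul_assoc]
    have t2 : Eᴴ * Dᴴ * E = Tᴴ + Tᴴ * J * T := by
      rw [← hTh, hE, Matrix.mul_add, Matrix.mul_one, ← mul_assoc]
    rw [t1, t2]
    abel
  rw [main]
  have hDform : Complex.I • (D - Dᴴ)
      = Matrix.fromBlocks (Complex.I • (M - Mᴴ)) 0 0 (Complex.I • (N - Nᴴ)) := by
    rw [hD, fromBlocks_conjTranspose]
    ext i j
    rcases i with i | i <;> rcases j with j | j <;>
      simp [Matrix.fromBlocks, Matrix.sub_apply, Matrix.smul_apply]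
  rw [hDform]
  exact (blockdiag_psd hM hN).conjTranspose_mul_mul_same E
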